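/- arXiv:1708.09294 — 3 statements merged into one kernel-verified Lean document; each statement's English description precedes it below -/
import Mathlib

section
/- Let J be the (non-periodic) characteristic interval corresponding to the pair of partitions (𝒯, 𝒯̃) obtained from the maximal splitting of 𝒯̂, and let Ĵ be the periodic characteristic interval corresponding to (𝒯̂, 𝒯̃̂). Then |J| ∼ |Ĵ|, with implied constants depending only on k. -/
open MeasureTheory Set
open scoped ENNReal NNReal

noncomputable section

/-- The measure on the torus `𝕋`, identified with `[0,1)`. -/
def μ01 : Measure ℝ := volume.restrict (Set.Ico 0 1)

/-- `f` is a periodic (1-periodic) spline of order `k` with knot multiplicity function `m`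
(the knots are the points of `[0,1)` where `m` is nonzero, counted with multiplicity `m`).
We use the right-continuous representatives. -/
def IsPeriodicSpline (k : ℕ) (m : ℝ → ℕ) (f : ℝ → ℝ) : Prop :=
  (∀ x, f (x + 1) = f x) ∧
  (∀ a b : ℝ, (∀ x ∈ Set.Ioo a b, m (Int.fract x) = 0) →
    ∃ P : Polynomial ℝ, P.degree < (k : WithBot ℕ) ∧ ∀ x ∈ Set.Ioo a b, f x = P.eval x) ∧
  (∀ x : ℝ, m (Int.fract x) < k → ContDiffAt ℝ (k - 1 - m (Int.fract x)) f x) ∧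
  (∀ x : ℝ, ContinuousWithinAt f (Set.Ici x) x)

/-- A periodic knot sequence `(σ_j)_{j∈ℤ}` of period `n` (i.e. `σ_{j+n} = σ_j + 1`),
with `0 ≤ σ_0 ≤ ⋯ ≤ σ_{n-1} < 1` and knot multiplicities at most `k`. -/
structure PKnots (k n : ℕ) where
  σ : ℤ → ℝ
  mono : Monotone σ
  per : ∀ j, σ (j + (n : ℤ)) = σ j + 1
  sep : ∀ j, σ j < σ (j + (k : ℤ))
  lo : 0 ≤ σ 0
  hi : σ ((n : ℤ) - 1) < 1

variable {k n : ℕ}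

/-- multiplicity of a point `x` in the knot sequence. -/
def PKnots.mult (K : PKnots k n) (x : ℝ) : ℕ :=
  Set.ncard {j : ℤ | 0 ≤ j ∧ j < (n : ℤ) ∧ K.σ j = x}

def PKnots.IsSpline (K : PKnots k n) (f : ℝ → ℝ) : Prop :=
  IsPeriodicSpline k K.mult f

/-- length of the support of the `j`-th B-spline. -/
def PKnots.ν (K : PKnots k n) (j : ℤ) : ℝ := K.σ (j + (k : ℤ)) - K.σ j

/-- `(N_i)_{i∈ℤ}` is the family of `L^∞`-normalized periodic B-splines of order `k`:
each `N_i` is a spline, the family is `n`-periodic in the index, `N_i` is nonnegative and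
nonzero, `N_i` is supported (as a function on the torus) in `[σ_i, σ_{i+k}]`, and the
family forms a partition of unity. -/
def IsBSplineFamily (K : PKnots k n) (N : ℤ → ℝ → ℝ) : Prop :=
  (∀ i, K.IsSpline (N i)) ∧
  (∀ i, N (i + (n : ℤ)) = N i) ∧
  (∀ i x, 0 ≤ N i x) ∧
  (∀ i, ∃ x, N i x ≠ 0) ∧
  (∀ i x, N i x ≠ 0 → ∃ r : ℤ, x + (r : ℝ) ∈ Set.Icc (K.σ i) (K.σ (i + (k : ℤ)))) ∧
  (∀ x, ∑ i ∈ Finset.Ico (0 : ℤ) (n : ℤ), N i x = 1)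

/-- `(Nd_i)` is the dual basis (inside the periodic spline space) to the B-spline family
`(N_i)`, biorthogonal in `L²(𝕋)`. -/
def IsDualFamily (K : PKnots k n) (N Nd : ℤ → ℝ → ℝ) : Prop :=
  (∀ i, K.IsSpline (Nd i)) ∧
  (∀ i, Nd (i + (n : ℤ)) = Nd i) ∧
  (∀ i j : ℤ, i ∈ Finset.Ico (0 : ℤ) (n : ℤ) → j ∈ Finset.Ico (0 : ℤ) (n : ℤ) →
    ∫ x in Set.Ico (0 : ℝ) 1, Nd i x * N j x = if i = j then 1 else 0)

/-- the coefficients `α̂_j` of the periodic orthogonal spline function corresponding to the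
removal of the knot `σ_{i0}`. -/
def alphaHat (K : PKnots k n) (i0 j : ℤ) : ℝ :=
  (-1 : ℝ) ^ (j - i0 + (k : ℤ)) *
    (∏ ℓ ∈ Finset.Ico (i0 - (k : ℤ) + 1) j, (K.σ i0 - K.σ ℓ) / (K.σ (ℓ + (k : ℤ)) - K.σ ℓ)) *
    (∏ ℓ ∈ Finset.Ico (j + 1) i0, (K.σ (ℓ + (k : ℤ)) - K.σ i0) / (K.σ (ℓ + (k : ℤ)) - K.σ ℓ))

/-- the periodic orthogonal spline function `ĝ = Σ_{j=i0-k}^{i0} α̂_j N̂_j^*`. -/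
def gHat (K : PKnots k n) (Nd : ℤ → ℝ → ℝ) (i0 : ℤ) : ℝ → ℝ :=
  fun x => ∑ j ∈ Finset.Icc (i0 - (k : ℤ)) i0, alphaHat K i0 j * Nd j x

/-- `[A,B]` is a characteristic interval corresponding to the knot `σ_{i0}`. -/
def IsCharInterval (K : PKnots k n) (i0 : ℤ) (A B : ℝ) : Prop :=
  ∃ j0 ∈ Finset.Icc (i0 - (k : ℤ)) i0,
    (∀ ℓ ∈ Finset.Icc (i0 - (k : ℤ)) i0, K.ν j0 ≤ 2 * K.ν ℓ) ∧
    (∀ j ∈ Finset.Icc (i0 - (k : ℤ)) i0,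
      (∀ ℓ ∈ Finset.Icc (i0 - (k : ℤ)) i0, K.ν j ≤ 2 * K.ν ℓ) →
      |alphaHat K i0 j| ≤ |alphaHat K i0 j0|) ∧
    ∃ l0 : ℕ, l0 < k ∧
      (∀ l : ℕ, l < k →
        K.σ (j0 + (l : ℤ) + 1) - K.σ (j0 + (l : ℤ)) ≤ K.σ (j0 + (l0 : ℤ) + 1) - K.σ (j0 + (l0 : ℤ))) ∧
      A = K.σ (j0 + (l0 : ℤ)) ∧ B = K.σ (j0 + (l0 : ℤ) + 1)

/-- periodic distance of indices `i, j ∈ {0, …, n-1}`. -/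
def pdist (n : ℕ) (i j : ℤ) : ℕ := min (i - j).natAbs (n - (i - j).natAbs)

/-- The arc `[a,b]` (as an interval on the torus) contains the arcs `[A,B]` and `[A',B']`. -/
def ArcContains (a b A B A' B' : ℝ) : Prop :=
  (∃ r : ℤ, Set.Icc (A + (r : ℝ)) (B + (r : ℝ)) ⊆ Set.Icc a b) ∧
  (∃ r : ℤ, Set.Icc (A' + (r : ℝ)) (B' + (r : ℝ)) ⊆ Set.Icc a b)

/-- The arc `[a,b] ⊂ 𝕋` is minimal under inclusion among intervals of the torus
containing the arcs `[A,B]` and `[A',B']`. -/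
def IsMinArc (a b A B A' B' : ℝ) : Prop :=
  a ≤ b ∧ b - a ≤ 1 ∧ ArcContains a b A B A' B' ∧
  ∀ a' b' : ℝ, a' ≤ b' → (∃ r : ℤ, a ≤ a' + (r : ℝ) ∧ b' + (r : ℝ) ≤ b) →
    ArcContains a' b' A B A' B' → b - a ≤ b' - a'

/-- number of knots of the knot sequence (counted with multiplicity) lying on the
arc `[a,b]` of the torus. -/
def knotCount (K : PKnots k n) (a b : ℝ) : ℕ :=
  Set.ncard {j : ℤ | 0 ≤ j ∧ j < (n : ℤ) ∧ ∃ r : ℤ, K.σ j + (r : ℝ) ∈ Set.Icc a b}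

/-- the subset of `[0,1)` corresponding to the arc `[a,b]` of the torus. -/
def arcSet (a b : ℝ) : Set ℝ := {x | x ∈ Set.Ico (0 : ℝ) 1 ∧ ∃ r : ℤ, x + (r : ℝ) ∈ Set.Icc a b}

/-- the subset of `[0,1)` corresponding to the open arc `(a,b)` of the torus. -/
def arcSetO (a b : ℝ) : Set ℝ := {x | x ∈ Set.Ico (0 : ℝ) 1 ∧ ∃ r : ℤ, x + (r : ℝ) ∈ Set.Ioo a b}

/-- the non-periodic partition of `[0,1]` obtained from the splitting of a periodic
partition at `0`: boundary knots get multiplicity `k`. -/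
def tauOf (K : PKnots k n) : ℤ → ℝ :=
  fun j => if j < 0 then 0 else if j < (n : ℤ) then K.σ j else 1

/-- the coefficients `α_j` of the non-periodic orthogonal spline function corresponding
to the knots `tauOf K` and the removal of `τ_{i0}`. -/
def alphaNP (K : PKnots k n) (i0 j : ℤ) : ℝ :=
  (-1 : ℝ) ^ (j - i0 + (k : ℤ)) *
    (∏ ℓ ∈ Finset.Ico (i0 - (k : ℤ) + 1) j,
      (tauOf K i0 - tauOf K ℓ) / (tauOf K (ℓ + (k : ℤ)) - tauOf K ℓ)) *
    (∏ ℓ ∈ Finset.Ico (j + 1) i0,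
      (tauOf K (ℓ + (k : ℤ)) - tauOf K i0) / (tauOf K (ℓ + (k : ℤ)) - tauOf K ℓ))

/-- the periodic partition is normalized so that the splitting at `0` is the maximal
splitting: `σ_0 = 1 - σ_{n-1} = (1/2) max_j (σ_j - σ_{j-1})`. -/
def IsMaxSplit (K : PKnots k n) : Prop :=
  (∀ j ∈ Finset.Ico (0 : ℤ) (n : ℤ), K.σ j - K.σ (j - 1) ≤ 2 * K.σ 0) ∧
  (∃ j ∈ Finset.Ico (0 : ℤ) (n : ℤ), K.σ j - K.σ (j - 1) = 2 * K.σ 0) ∧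
  1 - K.σ ((n : ℤ) - 1) = K.σ 0

/-- `[A,B]` is a characteristic interval for the non-periodic partition `tauOf K`
corresponding to the knot `τ_{i0}`. -/
def IsCharIntervalNP (K : PKnots k n) (i0 : ℤ) (A B : ℝ) : Prop :=
  ∃ j0 ∈ Finset.Icc (i0 - (k : ℤ)) i0,
    (∀ ℓ ∈ Finset.Icc (i0 - (k : ℤ)) i0,
      tauOf K (j0 + (k : ℤ)) - tauOf K j0 ≤ 2 * (tauOf K (ℓ + (k : ℤ)) - tauOf K ℓ)) ∧
    (∀ j ∈ Finset.Icc (i0 - (k : ℤ)) i0,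
      (∀ ℓ ∈ Finset.Icc (i0 - (k : ℤ)) i0,
        tauOf K (j + (k : ℤ)) - tauOf K j ≤ 2 * (tauOf K (ℓ + (k : ℤ)) - tauOf K ℓ)) →
      |alphaNP K i0 j| ≤ |alphaNP K i0 j0|) ∧
    ∃ l0 : ℕ, l0 < k ∧
      (∀ l : ℕ, l < k →
        tauOf K (j0 + (l : ℤ) + 1) - tauOf K (j0 + (l : ℤ)) ≤
          tauOf K (j0 + (l0 : ℤ) + 1) - tauOf K (j0 + (l0 : ℤ))) ∧
      A = tauOf K (j0 + (l0 : ℤ)) ∧ B = tauOf K (j0 + (l0 : ℤ) + 1)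

/-- `s` is an admissible sequence of knots in the torus `𝕋 = [0,1)`: dense and each point
occurs at most `k` times. -/
def IsAdmissible (k : ℕ) (s : ℕ → ℝ) : Prop :=
  (∀ n, s n ∈ Set.Ico (0 : ℝ) 1) ∧
  (∀ x ∈ Set.Icc (0 : ℝ) 1, ∀ ε > 0, ∃ n, |s n - x| < ε) ∧
  (∀ x : ℝ, ∀ F : Finset ℕ, (∀ m ∈ F, s m = x) → F.card ≤ k)

/-- `K` is the increasing enumeration of the first `n` points `s_0, …, s_{n-1}`. -/
def Enumerates (s : ℕ → ℝ) (n : ℕ) (K : PKnots k n) : Prop :=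
  ∀ x : ℝ, {j : ℤ | 0 ≤ j ∧ j < (n : ℤ) ∧ K.σ j = x}.ncard = {m : ℕ | m < n ∧ s m = x}.ncard

/-- `[A n, B n]` is a characteristic interval `Ĵ_n` corresponding to the new knot
`s_{n-1}` in the partition formed by `s_0, …, s_{n-1}` (for every `n ≥ 2k`). -/
def HasCharIntervals (k : ℕ) (s : ℕ → ℝ) (A B : ℕ → ℝ) : Prop :=
  ∀ n : ℕ, 2 * k ≤ n → ∃ K : PKnots k n, Enumerates s n K ∧
    ∃ i0 : ℤ, 0 ≤ i0 ∧ i0 < (n : ℤ) ∧ K.σ i0 = s (n - 1) ∧ IsCharInterval K i0 (A n) (B n)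

/-- the multiplicity function of the knot set `{s_0, …, s_{n-1}}`. -/
def multUpTo (s : ℕ → ℝ) (n : ℕ) (x : ℝ) : ℕ := {m : ℕ | m < n ∧ s m = x}.ncard

/-- `(f_n)_{n ≥ 1}` is the periodic orthonormal spline system of order `k` corresponding to
the point sequence `(s_j)_{j ≥ 0}`:  `(f_n)_{n=1}^k` is an orthonormal basis of the spline
space on the knots `s_0, …, s_{k-1}`, and for `n ≥ k+1`, `f_n` is a unit vector in the spline
space on `s_0, …, s_{n-1}` orthogonal to the spline space on `s_0, …, s_{n-2}`. -/
def IsONSplineSystem (k : ℕ) (s : ℕ → ℝ) (f : ℕ → ℝ → ℝ) : Prop :=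
  (∀ m n : ℕ, 1 ≤ m → 1 ≤ n →
    ∫ x in Set.Ico (0 : ℝ) 1, f m x * f n x = if m = n then 1 else 0) ∧
  (∀ n, 1 ≤ n → n ≤ k → IsPeriodicSpline k (multUpTo s k) (f n)) ∧
  (∀ g : ℝ → ℝ, IsPeriodicSpline k (multUpTo s k) g →
    ∃ c : ℕ → ℝ, ∀ x, g x = ∑ i ∈ Finset.Icc 1 k, c i * f i x) ∧
  (∀ n, k + 1 ≤ n → IsPeriodicSpline k (multUpTo s n) (f n) ∧
    (∀ g : ℝ → ℝ, IsPeriodicSpline k (multUpTo s (n - 1)) g →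
      ∫ x in Set.Ico (0 : ℝ) 1, f n x * g x = 0))

end

namespace Aux9

variable {k n : ℕ}

lemma sig_neg (K : PKnots k n) {j : ℤ} (hj : j < 0) : K.σ j < 0 := by
  have h1 := K.per j
  have h2 : K.σ (j + (n:ℤ)) ≤ K.σ ((n:ℤ) - 1) := K.mono (by omega)
  have := K.hi
  linarith

lemma sig_ge (K : PKnots k n) {j : ℤ} (hj : (n:ℤ) ≤ j) : 1 ≤ K.σ j := by
  have h1 := K.per 0
  have h2 : K.σ ((0:ℤ) + (n:ℤ)) ≤ K.σ j := K.mono (by omega)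
  have := K.lo
  linarith

lemma tau_eq (K : PKnots k n) (j : ℤ) :
    tauOf K j = max 0 (min (K.σ j) 1) := by
  unfold tauOf
  split_ifs with h1 h2
  · have := sig_neg K h1
    rw [min_eq_left (by linarith), max_eq_left (by linarith)]
  · have h0 : (0:ℝ) ≤ K.σ j := le_trans K.lo (K.mono (by omega))
    have h1' : K.σ j ≤ K.σ ((n:ℤ) - 1) := K.mono (by omega)
    rw [min_eq_left (by linarith [K.hi]), max_eq_right h0]
  · have := sig_ge K (by omega : (n:ℤ) ≤ j)
    rw [min_eq_right this, max_eq_right zero_le_one]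

lemma clamp_lemma {a b : ℝ} (h : a ≤ b) :
    0 ≤ max 0 (min b 1) - max 0 (min a 1) ∧
      max 0 (min b 1) - max 0 (min a 1) ≤ b - a := by
  rcases le_total a 0 with h1|h1 <;> rcases le_total b 0 with h2|h2 <;>
    rcases le_total a 1 with h3|h3 <;> rcases le_total b 1 with h4|h4 <;>
    simp [max_def, min_def] <;> split_ifs <;> constructor <;> linarith

lemma tau_mono (K : PKnots k n) : Monotone (tauOf K) := by
  intro i j hij
  rw [tau_eq, tau_eq]
  have := (clamp_lemma (K.mono hij)).1
  linarith

lemma tau_lip (K : PKnots k n) {i j : ℤ} (hij : i ≤ j) :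
    tauOf K j - tauOf K i ≤ K.σ j - K.σ i := by
  rw [tau_eq, tau_eq]
  exact (clamp_lemma (K.mono hij)).2

/-- `σ_m ≤ (2m+1)σ_0` under max splitting. -/
lemma sigma_le (K : PKnots k n)
    (hgap : ∀ j ∈ Finset.Ico (0 : ℤ) (n : ℤ), K.σ j - K.σ (j - 1) ≤ 2 * K.σ 0)
    (m : ℕ) (hm : m < n) : K.σ m ≤ (2 * m + 1) * K.σ 0 := by
  induction m with
  | zero => simp
  | succ p ih =>
    have hp : p < n := by omega
    have h1 := hgap ((p:ℤ) + 1) (Finset.mem_Ico.2 ⟨by omega, by omega⟩)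
    have h2 : ((p:ℤ) + 1) - 1 = (p:ℤ) := by ring
    rw [h2] at h1
    have := ih hp
    have hc : ((p + 1 : ℕ) : ℤ) = (p:ℤ) + 1 := by push_cast; ring
    rw [hc]
    push_cast
    linarith

/-- `1 - σ_{n-1-m} ≤ (2m+1)σ_0` under max splitting. -/
lemma one_sub_sigma (K : PKnots k n)
    (hgap : ∀ j ∈ Finset.Ico (0 : ℤ) (n : ℤ), K.σ j - K.σ (j - 1) ≤ 2 * K.σ 0)
    (hend : 1 - K.σ ((n : ℤ) - 1) = K.σ 0)
    (m : ℕ) (hm : m < n) : 1 - K.σ ((n:ℤ) - 1 - m) ≤ (2 * m + 1) * K.σ 0 := by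
  induction m with
  | zero => simp; linarith
  | succ p ih =>
    have hp : p < n := by omega
    have h1 := hgap ((n:ℤ) - 1 - p) (Finset.mem_Ico.2 ⟨by omega, by omega⟩)
    have := ih hp
    have hc : ((n:ℤ) - 1 - ((p+1 : ℕ):ℤ)) = ((n:ℤ) - 1 - p) - 1 := by push_cast; ring
    rw [hc]
    push_cast
    linarith

/-- comparison of periodic and clamped interval lengths on the window. -/
lemma nu_ratio (K : PKnots k n) (hk : 0 < k) (hn : 2 * k ≤ n)
    (hgap : ∀ j ∈ Finset.Ico (0 : ℤ) (n : ℤ), K.σ j - K.σ (j - 1) ≤ 2 * K.σ 0)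
    (hend : 1 - K.σ ((n : ℤ) - 1) = K.σ 0)
    {i0 ℓ : ℤ} (hi0 : 0 ≤ i0) (hi0n : i0 < (n:ℤ)) (hℓ1 : i0 - k ≤ ℓ) (hℓ2 : ℓ ≤ i0) :
    tauOf K (ℓ + k) - tauOf K ℓ ≤ K.σ (ℓ + k) - K.σ ℓ ∧
      K.σ (ℓ + k) - K.σ ℓ ≤ 2 * k * (tauOf K (ℓ + k) - tauOf K ℓ) := by
  have hσ0 := K.lo
  refine ⟨tau_lip K (by omega), ?_⟩
  rcases lt_or_ge ℓ 0 with hneg | hpos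
  · -- ℓ < 0, then 0 ≤ ℓ + k < n
    have hℓk0 : 0 ≤ ℓ + k := by omega
    have hℓkn : ℓ + k < (n:ℤ) := by omega
    have ht1 : tauOf K ℓ = 0 := by simp [tauOf, hneg]
    have ht2 : tauOf K (ℓ + k) = K.σ (ℓ + k) := by
      simp [tauOf, not_lt.2 hℓk0, hℓkn]
    rw [ht1, ht2]
    have hper := K.per ℓ
    set m : ℕ := (-1 - ℓ).toNat with hm
    have hmk : (m:ℤ) = -1 - ℓ := by omega
    have hmlt : m < n := by omega
    have h1 := one_sub_sigma K hgap hend m hmlt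
    have h2 : (n:ℤ) - 1 - m = ℓ + n := by omega
    rw [h2] at h1
    have h3 : K.σ 0 ≤ K.σ (ℓ + k) := K.mono hℓk0
    have h4 : (2 * (m:ℝ) + 1) ≤ 2 * k - 1 := by
      have : (m:ℤ) ≤ (k:ℤ) - 1 := by omega
      have : (m:ℝ) ≤ (k:ℝ) - 1 := by exact_mod_cast this
      linarith
    have h5 : (2 * (m:ℝ) + 1) * K.σ 0 ≤ (2 * (k:ℝ) - 1) * K.σ (ℓ + k) := by
      have : (2 * (m:ℝ) + 1) * K.σ 0 ≤ (2 * (k:ℝ) - 1) * K.σ 0 := by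
        apply mul_le_mul_of_nonneg_right h4 hσ0
      have h6 : (2 * (k:ℝ) - 1) * K.σ 0 ≤ (2 * (k:ℝ) - 1) * K.σ (ℓ + k) := by
        apply mul_le_mul_of_nonneg_left h3
        have : (1:ℝ) ≤ (k:ℝ) := by exact_mod_cast hk
        linarith
      linarith
    linarith
  · rcases lt_or_ge (ℓ + k) (n:ℤ) with hlt | hge
    · -- interior: equal
      have ht1 : tauOf K ℓ = K.σ ℓ := by simp [tauOf, not_lt.2 hpos, (show ℓ < (n:ℤ) by omega)]
      have ht2 : tauOf K (ℓ + k) = K.σ (ℓ + k) := by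
        simp [tauOf, not_lt.2 (by omega : (0:ℤ) ≤ ℓ + k), hlt]
      rw [ht1, ht2]
      have hmono : K.σ ℓ ≤ K.σ (ℓ + k) := K.mono (by omega)
      have : (1:ℝ) ≤ 2 * k := by
        have : (1:ℝ) ≤ (k:ℝ) := by exact_mod_cast hk
        linarith
      nlinarith
    · -- right boundary: ℓ + k ≥ n
      have hℓn : ℓ < (n:ℤ) := by omega
      have ht1 : tauOf K ℓ = K.σ ℓ := by simp [tauOf, not_lt.2 hpos, hℓn]
      have ht2 : tauOf K (ℓ + k) = 1 := by
        simp [tauOf, not_lt.2 (by omega : (0:ℤ) ≤ ℓ + k), not_lt.2 hge]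
      rw [ht1, ht2]
      have hper := K.per (ℓ + k - n)
      have hpc : ℓ + k - (n:ℤ) + (n:ℤ) = ℓ + k := by ring
      rw [hpc] at hper
      set m : ℕ := (ℓ + k - n).toNat with hm
      have hmk : (m:ℤ) = ℓ + k - n := by omega
      have hmlt : m < n := by omega
      have h1 := sigma_le K hgap m hmlt
      have h2 : K.σ (m:ℤ) = K.σ (ℓ + k - n) := by rw [hmk]
      rw [h2] at h1
      have h3 : K.σ ℓ ≤ K.σ ((n:ℤ) - 1) := K.mono (by omega)
      have h4 : K.σ 0 ≤ 1 - K.σ ℓ := by linarith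
      have h5 : (2 * (m:ℝ) + 1) ≤ 2 * k - 1 := by
        have : (m:ℤ) ≤ (k:ℤ) - 1 := by omega
        have : (m:ℝ) ≤ (k:ℝ) - 1 := by exact_mod_cast this
        linarith
      have hσ0' : (0:ℝ) ≤ 1 - K.σ ℓ := le_trans hσ0 h4
      have h6 : (2 * (m:ℝ) + 1) * K.σ 0 ≤ (2 * (k:ℝ) - 1) * (1 - K.σ ℓ) := by
        have ha : (2 * (m:ℝ) + 1) * K.σ 0 ≤ (2 * (k:ℝ) - 1) * K.σ 0 :=
          mul_le_mul_of_nonneg_right h5 hσ0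
        have hb : (2 * (k:ℝ) - 1) * K.σ 0 ≤ (2 * (k:ℝ) - 1) * (1 - K.σ ℓ) := by
          apply mul_le_mul_of_nonneg_left h4
          have : (1:ℝ) ≤ (k:ℝ) := by exact_mod_cast hk
          linarith
        linarith
      linarith

/-- maximal subinterval of a window of `k` intervals has length within factor `k`. -/
lemma char_len {k : ℕ} (hk : 0 < k) (f : ℤ → ℝ) (hmono : Monotone f) (j0 : ℤ)
    (l0 : ℕ) (hl0 : l0 < k)
    (hmax : ∀ l : ℕ, l < k →
      f (j0 + (l:ℤ) + 1) - f (j0 + (l:ℤ)) ≤ f (j0 + (l0:ℤ) + 1) - f (j0 + (l0:ℤ))) :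
    f (j0 + (k:ℤ)) - f j0 ≤ k * (f (j0 + (l0:ℤ) + 1) - f (j0 + (l0:ℤ))) ∧
      f (j0 + (l0:ℤ) + 1) - f (j0 + (l0:ℤ)) ≤ f (j0 + (k:ℤ)) - f j0 := by
  constructor
  · have htel := Finset.sum_range_sub (fun l : ℕ => f (j0 + (l:ℤ))) k
    have hsum : ∑ l ∈ Finset.range k, (f (j0 + ((l:ℤ) + 1)) - f (j0 + (l:ℤ))) =
        f (j0 + (k:ℤ)) - f j0 := by
      have : ∀ l : ℕ, f (j0 + ((l + 1 : ℕ):ℤ)) = f (j0 + ((l:ℤ) + 1)) := by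
        intro l; norm_cast
      simpa [this] using htel
    have hle : ∑ l ∈ Finset.range k, (f (j0 + ((l:ℤ) + 1)) - f (j0 + (l:ℤ))) ≤
        ∑ l ∈ Finset.range k, (f (j0 + (l0:ℤ) + 1) - f (j0 + (l0:ℤ))) := by
      apply Finset.sum_le_sum
      intro l hl
      have := hmax l (Finset.mem_range.1 hl)
      have hc : j0 + ((l:ℤ) + 1) = j0 + (l:ℤ) + 1 := by ring
      rw [hc]
      exact this
    rw [Finset.sum_const, Finset.card_range] at hle
    rw [hsum] at hle
    simpa [nsmul_eq_mul] using hle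
  · have h1 : f (j0 + (l0:ℤ) + 1) ≤ f (j0 + (k:ℤ)) := hmono (by omega)
    have h2 : f j0 ≤ f (j0 + (l0:ℤ)) := hmono (by omega)
    linarith

end Aux9

/-- **Comparison of periodic and non-periodic characteristic intervals.**  For the maximal
splitting of a periodic partition `𝒯̂`, the non-periodic characteristic interval `J`
(for the split partition `𝒯` and removed knot `τ_{i0}`) and the periodic characteristic
interval `Ĵ` (for `𝒯̂` and `σ_{i0}`) satisfy `|J| ∼ |Ĵ|`, with constants depending only
on `k`. -/
theorem stmt9 (k : ℕ) (hk : 0 < k) :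
    ∃ c₁ c₂ : ℝ, 0 < c₁ ∧ 0 < c₂ ∧
    ∀ n : ℕ, 2 * k ≤ n → ∀ K : PKnots k n, IsMaxSplit K →
    ∀ i0 : ℤ, 0 ≤ i0 → i0 < (n : ℤ) →
    ∀ A B A' B' : ℝ, IsCharInterval K i0 A B → IsCharIntervalNP K i0 A' B' →
      c₁ * (B - A) ≤ B' - A' ∧ B' - A' ≤ c₂ * (B - A) := by
  have hk' : (1:ℝ) ≤ (k:ℝ) := by exact_mod_cast hk
  refine ⟨1 / (4 * (k:ℝ)^2), 2 * k, by positivity, by positivity, ?_⟩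
  intro n hn K hms i0 hi00 hi0n A B A' B' hCI hCInp
  obtain ⟨j0, hj0mem, hj0min, -, l0, hl0k, hl0max, hA, hB⟩ := hCI
  obtain ⟨j0', hj0'mem, hj0'min, -, l0', hl0'k, hl0'max, hA', hB'⟩ := hCInp
  obtain ⟨hgap, -, hend⟩ := hms
  have hj0m := Finset.mem_Icc.1 hj0mem
  have hj0'm := Finset.mem_Icc.1 hj0'mem
  subst hA hB hA' hB'
  have hcl := Aux9.char_len hk K.σ K.mono j0 l0 hl0k hl0max
  have hcl' := Aux9.char_len hk (tauOf K) (Aux9.tau_mono K) j0' l0' hl0'k hl0'max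
  have hr := Aux9.nu_ratio K hk hn hgap hend hi00 hi0n hj0m.1 hj0m.2
  have hr' := Aux9.nu_ratio K hk hn hgap hend hi00 hi0n hj0'm.1 hj0'm.2
  have hmin := hj0min j0' hj0'mem
  have hmin' := hj0'min j0 hj0mem
  simp only [PKnots.ν] at hmin
  constructor
  · -- lower bound
    have hk0 : (0:ℝ) ≤ 4 * k := by positivity
    have step : 4 * (k:ℝ) * (tauOf K (j0' + (k:ℤ)) - tauOf K j0') ≤
        4 * (k:ℝ) * ((k:ℝ) * (tauOf K (j0' + (l0':ℤ) + 1) - tauOf K (j0' + (l0':ℤ)))) :=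
      mul_le_mul_of_nonneg_left hcl'.1 hk0
    have hfin : K.σ (j0 + (l0:ℤ) + 1) - K.σ (j0 + (l0:ℤ)) ≤
        4 * (k:ℝ)^2 * (tauOf K (j0' + (l0':ℤ) + 1) - tauOf K (j0' + (l0':ℤ))) := by
      nlinarith [hcl.2, hmin, hr'.2, step]
    have h4 : (0:ℝ) < 4 * (k:ℝ)^2 := by positivity
    rw [div_mul_eq_mul_div, one_mul, div_le_iff₀ h4]
    linarith
  · -- upper bound
    nlinarith [hcl'.2, hmin', hr.1, hcl.1]
end

section
/- For the maximal splitting of 𝒯̂, there exists a constant c with c ∼ 1 (i.e. c and 1/c bounded by constants depending only on k) such that α_j = c·α̂_j for all j ∉ B, where B = {−k,…,−1} ∪ {n−k,…,n−1} is the set of boundary indices, α_j are the coefficients of the non-periodic orthogonal spline function g = Σ_j α_j N_j* on 𝒯 and α̂_j those of the periodic orthogonal spline function ĝ = Σ_j α̂_j N̂_j* on 𝒯̂. -/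
open MeasureTheory Set
open scoped ENNReal NNReal

/-! ### Auxiliary lemmas for `stmt10` -/

private lemma stmt10_ratio_bnd {M x y a b : ℝ} (hM : 0 ≤ M) (hx : 0 < x) (hy : 0 < y)
    (ht : 0 < a - x) (hab : a - x = b - y) (hax : a - x ≤ M * x) (hay : a - x ≤ M * y) :
    1/(M+1) ≤ (x/y)/(a/b) ∧ (x/y)/(a/b) ≤ M+1 := by
  have ha : 0 < a := by linarith
  have hb : 0 < b := by linarith
  have hr : (x/y)/(a/b) = (x*b)/(y*a) := by field_simp
  rw [hr]
  refine ⟨?_, ?_⟩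
  · rw [div_le_div_iff₀ (by linarith) (by positivity)]
    nlinarith [mul_le_mul_of_nonneg_left hax hy.le, mul_nonneg hx.le ht.le,
      mul_nonneg (mul_nonneg hM hx.le) ht.le]
  · rw [div_le_iff₀ (by positivity)]
    nlinarith [mul_le_mul_of_nonneg_left hay hx.le, mul_nonneg hy.le ht.le,
      mul_nonneg (mul_nonneg hM hy.le) ht.le]

private lemma stmt10_prod_bnd {k : ℕ} {s : Finset ℤ} {f : ℤ → ℝ} {M : ℝ} (hM : 1 ≤ M)
    (h : ∀ i ∈ s, 1/M ≤ f i ∧ f i ≤ M) (hcard : s.card ≤ k) :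
    (1/M)^k ≤ ∏ i ∈ s, f i ∧ ∏ i ∈ s, f i ≤ M^k := by
  have hM0 : 0 < M := by linarith
  constructor
  · calc (1/M)^k ≤ (1/M)^s.card :=
        pow_le_pow_of_le_one (by positivity) (by rw [div_le_one hM0]; linarith) hcard
    _ = ∏ _i ∈ s, (1/M) := (Finset.prod_const _).symm
    _ ≤ ∏ i ∈ s, f i := Finset.prod_le_prod (fun i _ => by positivity) (fun i hi => (h i hi).1)
  · calc ∏ i ∈ s, f i ≤ ∏ _i ∈ s, M :=
        Finset.prod_le_prod (fun i hi => le_trans (by positivity) (h i hi).1)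
          (fun i hi => (h i hi).2)
    _ = M^s.card := Finset.prod_const _
    _ ≤ M^k := pow_le_pow_right₀ hM hcard


set_option maxHeartbeats 2000000 in
/-- **Comparison of periodic and non-periodic dual B-spline coefficients.**  For the
maximal splitting, there is a constant `c ∼ 1` (i.e. `1/C_k ≤ c ≤ C_k` with `C_k`
depending only on `k`) such that `α_j = c ⋅ α̂_j` for all non-boundary indices `j`,
i.e. all `j` with `0 ≤ j < n - k`; here `α_j`, `α̂_j` are given by the explicit product
formulas for `i0-k ≤ j ≤ i0` and vanish otherwise. -/
theorem stmt10 (k : ℕ) (hk : 0 < k) :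
    ∃ Cb : ℝ, 1 ≤ Cb ∧
    ∀ n : ℕ, k + 1 ≤ n → ∀ K : PKnots k n, IsMaxSplit K →
    ∀ i0 : ℤ, 0 ≤ i0 → i0 < (n : ℤ) →
    ∃ c : ℝ, 1 / Cb ≤ c ∧ c ≤ Cb ∧
      ∀ j : ℤ, 0 ≤ j → j < (n : ℤ) - (k : ℤ) →
        (if j ∈ Finset.Icc (i0 - (k : ℤ)) i0 then alphaNP K i0 j else 0) =
          c * (if j ∈ Finset.Icc (i0 - (k : ℤ)) i0 then alphaHat K i0 j else 0) := by
    classical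
  have hM1 : (1:ℝ) ≤ 2*(k:ℝ)+1 := by
    have : (0:ℝ) ≤ (k:ℝ) := Nat.cast_nonneg k
    linarith
  refine ⟨(2*(k:ℝ)+1)^(2*k), one_le_pow₀ hM1, ?_⟩
  intro n hn K hMS i0 hi00 hi0n
  have hkZ : (1:ℤ) ≤ (k:ℤ) := by exact_mod_cast hk
  have hnk : (k:ℤ) + 1 ≤ (n:ℤ) := by exact_mod_cast hn
  have hσ0 : 0 < K.σ 0 := by have h1 := hMS.2.2; have h2 := K.hi; linarith
  have hmono := K.mono
  have tauz : ∀ j : ℤ, j < 0 → tauOf K j = 0 := by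
    intro j hj; simp only [tauOf]; rw [if_pos hj]
  have taus : ∀ j : ℤ, 0 ≤ j → j < (n:ℤ) → tauOf K j = K.σ j := by
    intro j h0 h1; simp only [tauOf]; rw [if_neg (by omega), if_pos h1]
  have tauo : ∀ j : ℤ, (n:ℤ) ≤ j → tauOf K j = 1 := by
    intro j h1; simp only [tauOf]; rw [if_neg (by omega), if_neg (by omega)]
  have hσn : K.σ (n:ℤ) = K.σ 0 + 1 := by have := K.per 0; simpa using this
  have hσn1 : K.σ ((n:ℤ) - 1) = 1 - K.σ 0 := by have := hMS.2.2; linarith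
  have hgap : ∀ j : ℤ, 0 ≤ j → j ≤ (n:ℤ) → K.σ j - K.σ (j-1) ≤ 2 * K.σ 0 := by
    intro j h0 h1
    rcases lt_or_eq_of_le h1 with h | h
    · exact hMS.1 j (Finset.mem_Ico.mpr ⟨h0, h⟩)
    · subst h; rw [hσn, hσn1]; linarith
  have hteleUp : ∀ d : ℕ, (d:ℤ) ≤ (n:ℤ) → K.σ (d:ℤ) - K.σ 0 ≤ 2 * (d:ℝ) * K.σ 0 := by
    intro d
    induction d with
    | zero => intro _; simp
    | succ m ih =>
      intro h
      have hm : (m:ℤ) ≤ (n:ℤ) := by push_cast at h ⊢; omega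
      have h1 := ih hm
      have h2 := hgap ((m:ℤ)+1) (by omega) (by push_cast at h ⊢; omega)
      have e1 : ((m:ℤ)+1) - 1 = (m:ℤ) := by ring
      rw [e1] at h2
      have e2 : (((m+1 : ℕ)) : ℤ) = (m:ℤ)+1 := by push_cast; ring
      rw [e2]
      push_cast
      nlinarith [h1, h2]
  have hteleDn : ∀ d : ℕ, (d:ℤ) ≤ (n:ℤ) →
      K.σ (n:ℤ) - K.σ ((n:ℤ) - (d:ℤ)) ≤ 2 * (d:ℝ) * K.σ 0 := by
    intro d
    induction d with
    | zero => intro _; simp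
    | succ m ih =>
      intro h
      have hm : (m:ℤ) ≤ (n:ℤ) := by push_cast at h ⊢; omega
      have h1 := ih hm
      have h2 := hgap ((n:ℤ) - (m:ℤ)) (by push_cast at h ⊢; omega) (by omega)
      have e1 : ((n:ℤ) - (m:ℤ)) - 1 = (n:ℤ) - ((m:ℤ)+1) := by ring
      rw [e1] at h2
      have e2 : ((n:ℤ) - (((m+1:ℕ)):ℤ)) = (n:ℤ) - ((m:ℤ)+1) := by push_cast; ring
      rw [e2]
      push_cast
      nlinarith [h1, h2]
  have hσneg : ∀ j : ℤ, j < 0 → K.σ j < 0 := by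
    intro j hj
    have h1 : K.σ j ≤ K.σ (-1) := hmono (by omega)
    have h2 := K.per (-1)
    have e : (-1:ℤ) + (n:ℤ) = (n:ℤ) - 1 := by ring
    rw [e] at h2
    have := K.hi
    linarith
  have hσi0 : K.σ 0 ≤ K.σ i0 := hmono hi00
  have hσi0' : K.σ i0 ≤ 1 - K.σ 0 := by
    have : K.σ i0 ≤ K.σ ((n:ℤ)-1) := hmono (by omega)
    rw [hσn1] at this; exact this
  -- the ratio functions
  set r1 : ℤ → ℝ := fun ℓ =>
    (K.σ i0 / K.σ (ℓ + (k:ℤ))) / ((K.σ i0 - K.σ ℓ) / (K.σ (ℓ + (k:ℤ)) - K.σ ℓ)) with hr1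
  set r2 : ℤ → ℝ := fun ℓ =>
    ((1 - K.σ i0) / (1 - K.σ ℓ)) / ((K.σ (ℓ + (k:ℤ)) - K.σ i0) / (K.σ (ℓ + (k:ℤ)) - K.σ ℓ))
    with hr2
  -- bounds for r1 on the first bad range
  have hQ1 : ∀ ℓ ∈ Finset.Ico (i0 - (k:ℤ) + 1) 0,
      1/(2*(k:ℝ)+1) ≤ r1 ℓ ∧ r1 ℓ ≤ 2*(k:ℝ)+1 := by
    intro ℓ hℓ
    obtain ⟨hℓ1, hℓ2⟩ := Finset.mem_Ico.mp hℓ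
    have hx : 0 < K.σ i0 := lt_of_lt_of_le hσ0 hσi0
    have hy : 0 < K.σ (ℓ + (k:ℤ)) := lt_of_lt_of_le hσ0 (hmono (by omega))
    have hy' : K.σ 0 ≤ K.σ (ℓ + (k:ℤ)) := hmono (by omega)
    have hneg : K.σ ℓ < 0 := hσneg ℓ hℓ2
    -- -σ ℓ ≤ 2k σ0
    have hbd : -K.σ ℓ ≤ 2*(k:ℝ)*K.σ 0 := by
      have hd0 : (((-ℓ).toNat : ℤ)) = -ℓ := Int.toNat_of_nonneg (by omega)
      have hdk : ((-ℓ).toNat : ℤ) ≤ (k:ℤ) := by omega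
      have := hteleDn (-ℓ).toNat (by omega)
      have e : (n:ℤ) - (((-ℓ).toNat : ℤ)) = ℓ + (n:ℤ) := by omega
      rw [e] at this
      have hper := K.per ℓ
      have hdR : (((-ℓ).toNat : ℝ)) ≤ (k:ℝ) := by exact_mod_cast hdk
      nlinarith [this, hper, hσ0]
    have := stmt10_ratio_bnd (M := 2*(k:ℝ)) (x := K.σ i0) (y := K.σ (ℓ + (k:ℤ)))
      (a := K.σ i0 - K.σ ℓ) (b := K.σ (ℓ + (k:ℤ)) - K.σ ℓ)
      (by positivity) hx hy (by linarith) (by ring)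
      (by nlinarith [hσi0, hσ0]) (by nlinarith [hy', hσ0])
    simpa [hr1] using this
  -- bounds for r2 on the second bad range
  have hQ2 : ∀ ℓ ∈ Finset.Ico ((n:ℤ) - (k:ℤ)) i0,
      1/(2*(k:ℝ)+1) ≤ r2 ℓ ∧ r2 ℓ ≤ 2*(k:ℝ)+1 := by
    intro ℓ hℓ
    obtain ⟨hℓ1, hℓ2⟩ := Finset.mem_Ico.mp hℓ
    have hx : 0 < 1 - K.σ i0 := by linarith
    have hyσ : K.σ ℓ ≤ 1 - K.σ 0 := by
      have : K.σ ℓ ≤ K.σ ((n:ℤ)-1) := hmono (by omega)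
      rw [hσn1] at this; exact this
    have hy : 0 < 1 - K.σ ℓ := by linarith
    -- σ(ℓ+k) = 1 + σ(ℓ+k-n), and the excess is ≤ 2k σ0
    have hper := K.per (ℓ + (k:ℤ) - (n:ℤ))
    have e : ℓ + (k:ℤ) - (n:ℤ) + (n:ℤ) = ℓ + (k:ℤ) := by ring
    rw [e] at hper
    have hepos : 0 < K.σ (ℓ + (k:ℤ) - (n:ℤ)) ∨ 0 ≤ K.σ (ℓ + (k:ℤ) - (n:ℤ)) := by
      right; exact le_trans hσ0.le (hmono (by omega))
    have he0 : K.σ 0 ≤ K.σ (ℓ + (k:ℤ) - (n:ℤ)) := hmono (by omega)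
    have hebd : K.σ (ℓ + (k:ℤ) - (n:ℤ)) ≤ 2*(k:ℝ)*K.σ 0 := by
      have hd0 : (((ℓ + (k:ℤ) - (n:ℤ)).toNat : ℤ)) = ℓ + (k:ℤ) - (n:ℤ) :=
        Int.toNat_of_nonneg (by omega)
      have hdk : ((ℓ + (k:ℤ) - (n:ℤ)).toNat : ℤ) ≤ (k:ℤ) - 1 := by omega
      have := hteleUp (ℓ + (k:ℤ) - (n:ℤ)).toNat (by omega)
      rw [hd0] at this
      have hdR : (((ℓ + (k:ℤ) - (n:ℤ)).toNat : ℝ)) ≤ (k:ℝ) - 1 := by exact_mod_cast hdk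
      nlinarith [this, hσ0]
    have := stmt10_ratio_bnd (M := 2*(k:ℝ)) (x := 1 - K.σ i0) (y := 1 - K.σ ℓ)
      (a := K.σ (ℓ + (k:ℤ)) - K.σ i0) (b := K.σ (ℓ + (k:ℤ)) - K.σ ℓ)
      (by positivity) hx hy (by nlinarith [hper, he0, hσ0]) (by ring)
      (by nlinarith [hper, hebd, hσ0, hx, hσi0']) (by nlinarith [hper, hebd, hσ0, hy, hyσ])
    simpa [hr2] using this
  -- cardinalities of the bad ranges
  have hc1 : (Finset.Ico (i0 - (k:ℤ) + 1) 0).card ≤ k := by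
    rw [Int.card_Ico]; omega
  have hc2 : (Finset.Ico ((n:ℤ) - (k:ℤ)) i0).card ≤ k := by
    rw [Int.card_Ico]; omega
  have hQ1b := stmt10_prod_bnd hM1 hQ1 hc1
  have hQ2b := stmt10_prod_bnd hM1 hQ2 hc2
  have hlbpos : (0:ℝ) < (1/(2*(k:ℝ)+1))^k := by positivity
  have hQ1pos : 0 < ∏ ℓ ∈ Finset.Ico (i0 - (k:ℤ) + 1) 0, r1 ℓ := lt_of_lt_of_le hlbpos hQ1b.1
  have hQ2pos : 0 < ∏ ℓ ∈ Finset.Ico ((n:ℤ) - (k:ℤ)) i0, r2 ℓ := lt_of_lt_of_le hlbpos hQ2b.1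
  refine ⟨(∏ ℓ ∈ Finset.Ico (i0 - (k:ℤ) + 1) 0, r1 ℓ) *
      (∏ ℓ ∈ Finset.Ico ((n:ℤ) - (k:ℤ)) i0, r2 ℓ), ?_, ?_, ?_⟩
  · -- lower bound
    have e : 1/(2*(k:ℝ)+1)^(2*k) = (1/(2*(k:ℝ)+1))^k * (1/(2*(k:ℝ)+1))^k := by
      rw [show 2*k = k+k from two_mul k, pow_add]
      ring
    rw [e]
    exact mul_le_mul hQ1b.1 hQ2b.1 hlbpos.le hQ1pos.le
  · -- upper bound
    have e : (2*(k:ℝ)+1)^(2*k) = (2*(k:ℝ)+1)^k * (2*(k:ℝ)+1)^k := by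
      rw [show 2*k = k+k from two_mul k, pow_add]
    rw [e]
    exact mul_le_mul hQ1b.2 hQ2b.2 hQ2pos.le (by positivity)
  · -- the identity
    intro j hj0 hjnk
    by_cases hjmem : j ∈ Finset.Icc (i0 - (k:ℤ)) i0
    · obtain ⟨hjl, hjr⟩ := Finset.mem_Icc.mp hjmem
      rw [if_pos hjmem, if_pos hjmem]
      have hP1 : (∏ ℓ ∈ Finset.Ico (i0 - (k:ℤ) + 1) j,
          (tauOf K i0 - tauOf K ℓ) / (tauOf K (ℓ + (k:ℤ)) - tauOf K ℓ)) =
          (∏ ℓ ∈ Finset.Ico (i0 - (k:ℤ) + 1) 0, r1 ℓ) *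
          (∏ ℓ ∈ Finset.Ico (i0 - (k:ℤ) + 1) j,
            (K.σ i0 - K.σ ℓ) / (K.σ (ℓ + (k:ℤ)) - K.σ ℓ)) := by
        have step : ∀ ℓ ∈ Finset.Ico (i0 - (k:ℤ) + 1) j,
            (tauOf K i0 - tauOf K ℓ) / (tauOf K (ℓ + (k:ℤ)) - tauOf K ℓ) =
            (if ℓ < 0 then r1 ℓ else 1) *
              ((K.σ i0 - K.σ ℓ) / (K.σ (ℓ + (k:ℤ)) - K.σ ℓ)) := by
          intro ℓ hℓ
          obtain ⟨hℓ1, hℓ2⟩ := Finset.mem_Ico.mp hℓ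
          by_cases hneg : ℓ < 0
          · rw [if_pos hneg]
            have hnum : 0 < K.σ i0 - K.σ ℓ := by
              have := hσneg ℓ hneg; linarith [lt_of_lt_of_le hσ0 hσi0]
            have hden : 0 < K.σ (ℓ + (k:ℤ)) - K.σ ℓ := by
              have := K.sep ℓ; linarith
            have hfσ : (K.σ i0 - K.σ ℓ) / (K.σ (ℓ + (k:ℤ)) - K.σ ℓ) ≠ 0 :=
              (div_pos hnum hden).ne'
            rw [taus i0 hi00 hi0n, tauz ℓ hneg, taus (ℓ + (k:ℤ)) (by omega) (by omega),
              sub_zero, sub_zero, hr1]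
            exact (div_mul_cancel₀ _ hfσ).symm
          · rw [if_neg hneg, one_mul, taus i0 hi00 hi0n, taus ℓ (by omega) (by omega),
              taus (ℓ + (k:ℤ)) (by omega) (by omega)]
        rw [Finset.prod_congr rfl step, Finset.prod_mul_distrib]
        congr 1
        rw [← Finset.prod_filter]
        refine Finset.prod_congr ?_ (fun _ _ => rfl)
        ext ℓ
        simp only [Finset.mem_filter, Finset.mem_Ico]
        omega
      have hP2 : (∏ ℓ ∈ Finset.Ico (j + 1) i0,
          (tauOf K (ℓ + (k:ℤ)) - tauOf K i0) / (tauOf K (ℓ + (k:ℤ)) - tauOf K ℓ)) =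
          (∏ ℓ ∈ Finset.Ico ((n:ℤ) - (k:ℤ)) i0, r2 ℓ) *
          (∏ ℓ ∈ Finset.Ico (j + 1) i0,
            (K.σ (ℓ + (k:ℤ)) - K.σ i0) / (K.σ (ℓ + (k:ℤ)) - K.σ ℓ)) := by
        have step : ∀ ℓ ∈ Finset.Ico (j + 1) i0,
            (tauOf K (ℓ + (k:ℤ)) - tauOf K i0) / (tauOf K (ℓ + (k:ℤ)) - tauOf K ℓ) =
            (if (n:ℤ) - (k:ℤ) ≤ ℓ then r2 ℓ else 1) *
              ((K.σ (ℓ + (k:ℤ)) - K.σ i0) / (K.σ (ℓ + (k:ℤ)) - K.σ ℓ)) := by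
          intro ℓ hℓ
          obtain ⟨hℓ1, hℓ2⟩ := Finset.mem_Ico.mp hℓ
          by_cases hbig : (n:ℤ) - (k:ℤ) ≤ ℓ
          · rw [if_pos hbig]
            have hper := K.per (ℓ + (k:ℤ) - (n:ℤ))
            have e : ℓ + (k:ℤ) - (n:ℤ) + (n:ℤ) = ℓ + (k:ℤ) := by ring
            rw [e] at hper
            have he0 : K.σ 0 ≤ K.σ (ℓ + (k:ℤ) - (n:ℤ)) := hmono (by omega)
            have hnum : 0 < K.σ (ℓ + (k:ℤ)) - K.σ i0 := by nlinarith [hσi0', hσ0]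
            have hden : 0 < K.σ (ℓ + (k:ℤ)) - K.σ ℓ := by
              have := K.sep ℓ; linarith
            have hgσ : (K.σ (ℓ + (k:ℤ)) - K.σ i0) / (K.σ (ℓ + (k:ℤ)) - K.σ ℓ) ≠ 0 :=
              (div_pos hnum hden).ne'
            rw [taus i0 hi00 hi0n, taus ℓ (by omega) (by omega),
              tauo (ℓ + (k:ℤ)) (by omega), hr2]
            exact (div_mul_cancel₀ _ hgσ).symm
          · rw [if_neg hbig, one_mul, taus i0 hi00 hi0n, taus ℓ (by omega) (by omega),
              taus (ℓ + (k:ℤ)) (by omega) (by omega)]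
        rw [Finset.prod_congr rfl step, Finset.prod_mul_distrib]
        congr 1
        rw [← Finset.prod_filter]
        refine Finset.prod_congr ?_ (fun _ _ => rfl)
        ext ℓ
        simp only [Finset.mem_filter, Finset.mem_Ico]
        omega
      simp only [alphaNP, alphaHat]
      rw [hP1, hP2]
      ring
    · rw [if_neg hjmem, if_neg hjmem, mul_zero]
end

section
/- Let V be an arbitrary subinterval of 𝕋 and let β > 0. Then there exists a constant F_{k,β} depending only on k and β such that card{n ≥ 2k : Ĵ_n ⊆ V and |Ĵ_n| ≥ β|V|} ≤ F_{k,β}. -/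
open MeasureTheory Set
open scoped ENNReal NNReal

section AuxLemmas

lemma aux_ncard_le (S : Set ℕ) (c : ℕ) (h : ∀ T : Finset ℕ, ↑T ⊆ S → T.card ≤ c) :
    S.ncard ≤ c := by
  rcases S.finite_or_infinite with hf | hi
  · have := h hf.toFinset (by simp)
    rwa [Set.ncard_eq_toFinset_card _ hf]
  · obtain ⟨T, hT, hc⟩ := hi.exists_subset_card_eq (c + 1)
    have := h T hT; omega

lemma PKnots.sigma_add_mul {k n : ℕ} (K : PKnots k n) (j q : ℤ) :
    K.σ (j + q * n) = K.σ j + q := by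
  induction q using Int.induction_on with
  | zero => simp
  | succ i ih =>
    have h := K.per (j + (i : ℤ) * n)
    have e : j + ((i : ℤ) + 1) * n = j + (i : ℤ) * n + n := by ring
    rw [e, h, ih]; push_cast; ring
  | pred i ih =>
    have h := K.per (j + (-(i : ℤ) - 1) * n)
    have e : j + (-(i : ℤ) - 1) * n + n = j + (-(i : ℤ)) * n := by ring
    rw [e] at h
    rw [ih] at h
    push_cast at h ⊢
    linarith

lemma charFacts {k n : ℕ} (hk : 0 < k) (K : PKnots k n) (i0 : ℤ) (An Bn : ℝ)
    (h : IsCharInterval K i0 An Bn) :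
    An < Bn ∧
    ∃ j0 : ℤ, i0 - k ≤ j0 ∧ j0 ≤ i0 ∧ K.σ j0 ≤ An ∧ Bn ≤ K.σ (j0 + k) ∧
      K.σ (j0 + k) - K.σ j0 ≤ k * (Bn - An) ∧
      (Bn - An) / 2 ≤ K.σ (i0 + k) - K.σ i0 ∧
      (Bn - An) / 2 ≤ K.σ i0 - K.σ (i0 - k) := by
  obtain ⟨j0, hj0mem, hcomp, -, l0, hl0k, hl0max, hA, hB⟩ := h
  rw [Finset.mem_Icc] at hj0mem
  -- telescoping
  have tele := Finset.sum_range_sub (fun l : ℕ => K.σ (j0 + (l : ℤ))) k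
  push_cast at tele
  simp only [← add_assoc, add_zero] at tele
  -- each gap bounded by Bn - An
  have hgap : ∀ l ∈ Finset.range k,
      K.σ (j0 + (l : ℤ) + 1) - K.σ (j0 + (l : ℤ)) ≤ Bn - An := by
    intro l hl
    rw [Finset.mem_range] at hl
    have := hl0max l hl
    rw [← hA, ← hB] at this
    linarith [this]
  have hsum_le : K.σ (j0 + (k : ℤ)) - K.σ j0 ≤ k * (Bn - An) := by
    rw [← tele]
    calc ∑ l ∈ Finset.range k, (K.σ (j0 + (l : ℤ) + 1) - K.σ (j0 + (l : ℤ)))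
        ≤ ∑ _l ∈ Finset.range k, (Bn - An) := Finset.sum_le_sum hgap
      _ = k * (Bn - An) := by rw [Finset.sum_const, Finset.card_range, nsmul_eq_mul]
  have hsingle : Bn - An ≤ K.σ (j0 + (k : ℤ)) - K.σ j0 := by
    rw [← tele, hA, hB]
    exact Finset.single_le_sum
      (f := fun l : ℕ => K.σ (j0 + (l : ℤ) + 1) - K.σ (j0 + (l : ℤ)))
      (fun l _ => sub_nonneg.mpr (K.mono (by omega)))
      (Finset.mem_range.mpr hl0k)
  have hν_pos : 0 < K.σ (j0 + (k : ℤ)) - K.σ j0 := sub_pos.mpr (K.sep j0)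
  have hkR : (0 : ℝ) < k := by exact_mod_cast hk
  have hAB : An < Bn := by nlinarith
  refine ⟨hAB, j0, hj0mem.1, hj0mem.2, ?_, ?_, hsum_le, ?_, ?_⟩
  · rw [hA]; exact K.mono (by omega)
  · rw [hB]; exact K.mono (by omega)
  · have h1 := hcomp i0 (Finset.mem_Icc.mpr ⟨by omega, le_refl i0⟩)
    simp only [PKnots.ν] at h1
    linarith
  · have h1 := hcomp (i0 - k) (Finset.mem_Icc.mpr ⟨le_refl _, by omega⟩)
    simp only [PKnots.ν] at h1
    have e : i0 - (k : ℤ) + k = i0 := by ring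
    rw [e] at h1
    linarith

end AuxLemmas

set_option maxHeartbeats 2000000 in
/-- **Combinatorics of periodic characteristic intervals.**  Let `V` be a subinterval of
the torus and `β > 0`.  There is a constant `F_{k,β}` depending only on `k` and `β` such
that the number of indices `n ≥ 2k` with `Ĵ_n ⊆ V` and `|Ĵ_n| ≥ β |V|` is at most
`F_{k,β}`. -/
theorem stmt14 (k : ℕ) (hk : 0 < k) (β : ℝ) (hβ : 0 < β) :
    ∃ F : ℕ,
    ∀ s : ℕ → ℝ, IsAdmissible k s →
    ∀ A B : ℕ → ℝ, HasCharIntervals k s A B →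
    ∀ a b : ℝ, a ≤ b → b - a ≤ 1 →
      {n : ℕ | 2 * k ≤ n ∧
        (∃ r : ℤ, Set.Icc (A n + (r : ℝ)) (B n + (r : ℝ)) ⊆ Set.Icc a b) ∧
        β * (b - a) ≤ B n - A n}.ncard ≤ F := by
  classical
  obtain ⟨M, hM⟩ : ∃ M : ℕ, M = ⌊4 * (2 * (k : ℝ) + 1) / β⌋₊ + 1 := ⟨_, rfl⟩
  refine ⟨2 * k * M, ?_⟩
  intro s hs A B hAB a b hab hba1
  obtain ⟨L, hL⟩ : ∃ x : ℝ, x = b - a := ⟨_, rfl⟩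
  obtain ⟨S, hSdef⟩ : ∃ S : Set ℕ, S = {n : ℕ | 2 * k ≤ n ∧
      (∃ r : ℤ, Set.Icc (A n + (r : ℝ)) (B n + (r : ℝ)) ⊆ Set.Icc a b) ∧
      β * (b - a) ≤ B n - A n} := ⟨_, rfl⟩
  rw [← hSdef]
  rcases eq_or_lt_of_le (show (0:ℝ) ≤ L by rw [hL]; linarith) with hL0 | hLpos
  · -- degenerate case `b = a`: the set is empty
    have hSe : S = ∅ := by
      rw [hSdef, Set.eq_empty_iff_forall_notMem]
      rintro n ⟨hn1, ⟨r, hr⟩, hge⟩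
      obtain ⟨K, hEnum, i0, hi0a, hi0b, hsi0, hchar⟩ := hAB n hn1
      obtain ⟨hABlt, -⟩ := charFacts hk K i0 (A n) (B n) hchar
      have h1 := hr (Set.mem_Icc.mpr ⟨le_refl _, by linarith⟩)
      have h2 := hr (Set.mem_Icc.mpr ⟨by linarith, le_refl _⟩)
      rw [Set.mem_Icc] at h1 h2
      have : L = b - a := hL
      linarith [h1.1, h2.2]
    rw [hSe]
    simp
  · -- main case `a < b`
    have hβL : 0 < β * L := mul_pos hβ hLpos
    -- Step 1: the key per-`n` facts
    have key : ∀ n ∈ S, ∃ y : ℝ,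
        (a - k * L ≤ y ∧ y ≤ b + k * L) ∧ (∃ r : ℤ, y = s (n - 1) + r) ∧
        (∀ V : Finset ℝ, (∀ v ∈ V, ∃ d : ℤ, |v + (d : ℝ) - y| < β * L / 2) →
          ∑ v ∈ V, multUpTo s n v ≤ 2 * k - 1) := by
      intro n hn
      rw [hSdef] at hn
      obtain ⟨hn1, ⟨r, hr⟩, hge⟩ := hn
      rw [← hL] at hge
      obtain ⟨K, hEnum, i0, hi0a, hi0b, hsi0, hchar⟩ := hAB n hn1
      obtain ⟨hABlt, j0, hj1, hj2, hAle, hBle, hνub, hw1, hw2⟩ :=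
        charFacts hk K i0 (A n) (B n) hchar
      have h1 := hr (Set.mem_Icc.mpr ⟨le_refl _, by linarith⟩)
      have h2 := hr (Set.mem_Icc.mpr ⟨by linarith, le_refl _⟩)
      rw [Set.mem_Icc] at h1 h2
      have hBAL : B n - A n ≤ L := by rw [hL]; linarith [h1.1, h2.2]
      have hkR : (0:ℝ) ≤ k := Nat.cast_nonneg k
      have hkL : (k:ℝ) * (B n - A n) ≤ k * L := mul_le_mul_of_nonneg_left hBAL hkR
      have hm1 : K.σ j0 ≤ K.σ i0 := K.mono hj2
      have hm2 : K.σ i0 ≤ K.σ (j0 + k) := K.mono (by omega)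
      refine ⟨K.σ i0 + r, ⟨by linarith [h1.1], by linarith [h2.2]⟩,
        ⟨r, by rw [hsi0]⟩, ?_⟩
      intro V hV
      have hmult : ∀ v : ℝ, multUpTo s n v
          = ((Finset.Ico (0:ℤ) (n:ℤ)).filter (fun j => K.σ j = v)).card := by
        intro v
        have hset : {j : ℤ | 0 ≤ j ∧ j < (n:ℤ) ∧ K.σ j = v}
            = ↑((Finset.Ico (0:ℤ) (n:ℤ)).filter (fun j => K.σ j = v)) := by
          ext j
          simp [Finset.mem_Ico, and_assoc]
        rw [multUpTo, ← hEnum v, hset, Set.ncard_coe_finset]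
      have hD' : ∀ v : ℝ, ∃ d : ℤ, v ∈ V → |v + (d:ℝ) - (K.σ i0 + r)| < β * L / 2 := by
        intro v
        by_cases hv : v ∈ V
        · obtain ⟨d, hd⟩ := hV v hv
          exact ⟨d, fun _ => hd⟩
        · exact ⟨0, fun h => absurd h hv⟩
      choose D hD using hD'
      obtain ⟨T, hT⟩ : ∃ T : Finset ℤ,
          T = V.biUnion (fun v => (Finset.Ico (0:ℤ) (n:ℤ)).filter (fun j => K.σ j = v)) :=
        ⟨_, rfl⟩
      have hdisj : ∀ v ∈ V, ∀ w ∈ V, v ≠ w →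
          Disjoint ((Finset.Ico (0:ℤ) (n:ℤ)).filter (fun j => K.σ j = v))
                   ((Finset.Ico (0:ℤ) (n:ℤ)).filter (fun j => K.σ j = w)) := by
        intro v _ w _ hvw
        rw [Finset.disjoint_left]
        intro j hjv hjw
        rw [Finset.mem_filter] at hjv hjw
        exact hvw (hjv.2.symm.trans hjw.2)
      have hcardT : ∑ v ∈ V, multUpTo s n v = T.card := by
        rw [hT, Finset.card_biUnion hdisj]
        exact Finset.sum_congr rfl (fun v _ => hmult v)
      have hmap : ∀ j ∈ T, j + (D (K.σ j) - r) * n ∈ Finset.Ioo (i0 - k) (i0 + k) := by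
        intro j hj
        rw [hT, Finset.mem_biUnion] at hj
        obtain ⟨v, hvV, hjf⟩ := hj
        rw [Finset.mem_filter, Finset.mem_Ico] at hjf
        obtain ⟨⟨hj0', hjn⟩, hσj⟩ := hjf
        have hdv := hD v hvV
        rw [abs_lt] at hdv
        have hval : K.σ (j + (D (K.σ j) - r) * n) = v + (D v : ℝ) - r := by
          rw [hσj, K.sigma_add_mul j (D v - r), hσj]
          push_cast
          ring
        rw [Finset.mem_Ioo]
        constructor
        · by_contra hle
          push_neg at hle
          have hmono := K.mono hle
          rw [hval] at hmono
          linarith [hdv.1]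
        · by_contra hle
          push_neg at hle
          have hmono := K.mono hle
          rw [hval] at hmono
          linarith [hdv.2]
      have hinj : Set.InjOn (fun j => j + (D (K.σ j) - r) * n) ↑T := by
        intro j hjT j2 hj2T heq
        rw [Finset.mem_coe, hT, Finset.mem_biUnion] at hjT hj2T
        obtain ⟨v, hvV, hjf⟩ := hjT
        obtain ⟨v2, hv2V, hj2f⟩ := hj2T
        rw [Finset.mem_filter, Finset.mem_Ico] at hjf hj2f
        simp only at heq
        rw [hjf.2, hj2f.2] at heq
        by_cases hDe : D v = D v2
        · rw [hDe] at heq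
          exact add_right_cancel heq
        · exfalso
          have h4 : (D v2 - D v) * (n:ℤ) = j - j2 := by linear_combination -heq
          have h5 : (1:ℤ) ≤ |D v2 - D v| := Int.one_le_abs (sub_ne_zero.mpr (Ne.symm hDe))
          have h6 : (n:ℤ) ≤ |(D v2 - D v) * n| := by
            rw [abs_mul, abs_of_nonneg (show (0:ℤ) ≤ (n:ℤ) by positivity)]
            exact le_mul_of_one_le_left (by positivity) h5
          rw [h4] at h6
          rcases abs_cases (j - j2) with ⟨he, -⟩ | ⟨he, -⟩ <;>
            · rw [he] at h6
              omega
      have hcard := Finset.card_le_card_of_injOn _ hmap hinj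
      rw [Int.card_Ioo] at hcard
      rw [hcardT]
      omega
    -- Step 2: choose the points `y_n`
    have key' : ∀ n : ℕ, ∃ y : ℝ, n ∈ S →
        ((a - k * L ≤ y ∧ y ≤ b + k * L) ∧ (∃ r : ℤ, y = s (n - 1) + r) ∧
        (∀ V : Finset ℝ, (∀ v ∈ V, ∃ d : ℤ, |v + (d : ℝ) - y| < β * L / 2) →
          ∑ v ∈ V, multUpTo s n v ≤ 2 * k - 1)) := by
      intro n
      by_cases h : n ∈ S
      · obtain ⟨y, hy⟩ := key n h
        exact ⟨y, fun _ => hy⟩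
      · exact ⟨0, fun h' => absurd h' h⟩
    choose Y hY using key'
    obtain ⟨w, hw⟩ : ∃ x : ℝ, x = β * L / 4 := ⟨_, rfl⟩
    have hwpos : 0 < w := by rw [hw]; linarith
    -- Step 3: the bucket index is `< M`
    have hgM : ∀ n ∈ S, ⌊(Y n - (a - k * L)) / w⌋₊ < M := by
      intro n hn
      obtain ⟨⟨hy1, hy2⟩, -, -⟩ := hY n hn
      have hle : (Y n - (a - k * L)) / w ≤ 4 * (2 * (k:ℝ) + 1) / β := by
        have hnum : Y n - (a - k * L) ≤ (2 * (k:ℝ) + 1) * L := by linarith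
        calc (Y n - (a - k * L)) / w ≤ ((2 * (k:ℝ) + 1) * L) / w :=
              (div_le_div_iff_of_pos_right hwpos).mpr hnum
          _ = 4 * (2 * (k:ℝ) + 1) / β := by
              rw [div_eq_div_iff hwpos.ne' hβ.ne', hw]
              ring
      have hff := Nat.floor_le_floor hle
      rw [hM]
      omega
    -- Step 4: each bucket contains at most `2k` indices
    have hfiber : ∀ T : Finset ℕ, ↑T ⊆ S →
        (∀ m ∈ T, ∀ m' ∈ T,
          ⌊(Y m - (a - k * L)) / w⌋₊ = ⌊(Y m' - (a - k * L)) / w⌋₊) →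
        T.card ≤ 2 * k := by
      intro T hTS hgc
      by_contra hcard
      push_neg at hcard
      have hne : T.Nonempty := Finset.card_pos.mp (by omega)
      obtain ⟨nmax, hnmax⟩ : ∃ x : ℕ, x = T.max' hne := ⟨_, rfl⟩
      have hnT : nmax ∈ T := hnmax ▸ T.max'_mem hne
      have hnS : nmax ∈ S := hTS hnT
      obtain ⟨⟨hyn1, hyn2⟩, -, hQ⟩ := hY nmax hnS
      obtain ⟨E, hE⟩ : ∃ E : Finset ℕ, E = T.erase nmax := ⟨_, rfl⟩
      have hEcard : 2 * k ≤ E.card := by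
        rw [hE, Finset.card_erase_of_mem hnT]
        omega
      obtain ⟨V, hV⟩ : ∃ V : Finset ℝ, V = E.image (fun m => s (m - 1)) := ⟨_, rfl⟩
      have hcloseV : ∀ v ∈ V, ∃ d : ℤ, |v + (d:ℝ) - Y nmax| < β * L / 2 := by
        intro v hv
        rw [hV, Finset.mem_image] at hv
        obtain ⟨m, hmE, hmv⟩ := hv
        have hmT : m ∈ T := Finset.mem_of_mem_erase (hE ▸ hmE)
        have hmS : m ∈ S := hTS hmT
        obtain ⟨⟨hy1, hy2⟩, ⟨rm, hrm⟩, -⟩ := hY m hmS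
        refine ⟨rm, ?_⟩
        have hYm : Y m = v + (rm:ℝ) := by rw [hrm, hmv]
        have hab1 : |v + (rm:ℝ) - Y nmax| = |Y m - Y nmax| := by rw [hYm]
        rw [hab1]
        -- same bucket ⇒ distance < w
        have hgeq : ⌊(Y m - (a - k * L)) / w⌋₊ = ⌊(Y nmax - (a - k * L)) / w⌋₊ :=
          hgc m hmT nmax hnT
        have hum0 : 0 ≤ (Y m - (a - k * L)) / w := div_nonneg (by linarith) hwpos.le
        have hun0 : 0 ≤ (Y nmax - (a - k * L)) / w := div_nonneg (by linarith) hwpos.le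
        have hfl1 := Nat.lt_floor_add_one ((Y m - (a - k * L)) / w)
        have hfl2 := Nat.floor_le hun0
        have hfl3 := Nat.lt_floor_add_one ((Y nmax - (a - k * L)) / w)
        have hfl4 := Nat.floor_le hum0
        have hceq : ((⌊(Y m - (a - k * L)) / w⌋₊ : ℝ)) = ⌊(Y nmax - (a - k * L)) / w⌋₊ := by
          rw [hgeq]
        have hd1 : (Y m - (a - k * L)) / w - (Y nmax - (a - k * L)) / w < 1 := by linarith
        have hd2 : (Y nmax - (a - k * L)) / w - (Y m - (a - k * L)) / w < 1 := by linarith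
        have hYeq : Y m - Y nmax
            = ((Y m - (a - k * L)) / w - (Y nmax - (a - k * L)) / w) * w := by
          field_simp
          ring
        rw [abs_lt]
        constructor
        · nlinarith
        · nlinarith
      have hup := hQ V hcloseV
      have hmultN : ∀ v : ℝ, multUpTo s nmax v
          = ((Finset.range nmax).filter (fun m => s m = v)).card := by
        intro v
        have hset : {m : ℕ | m < nmax ∧ s m = v}
            = ↑((Finset.range nmax).filter (fun m => s m = v)) := by
          ext m
          simp [Finset.mem_range]
        rw [multUpTo, hset, Set.ncard_coe_finset]
      have hdisj2 : ∀ v ∈ V, ∀ u ∈ V, v ≠ u →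
          Disjoint ((Finset.range nmax).filter (fun m => s m = v))
                   ((Finset.range nmax).filter (fun m => s m = u)) := by
        intro v _ u _ hvu
        rw [Finset.disjoint_left]
        intro m hmv hmu
        rw [Finset.mem_filter] at hmv hmu
        exact hvu (hmv.2.symm.trans hmu.2)
      have hlow : E.card ≤ ∑ v ∈ V, multUpTo s nmax v := by
        have himg : (E.image (fun m => m - 1))
            ⊆ V.biUnion (fun v => (Finset.range nmax).filter (fun m => s m = v)) := by
          intro x hx
          rw [Finset.mem_image] at hx
          obtain ⟨m, hmE, rfl⟩ := hx
          have hmT : m ∈ T := Finset.mem_of_mem_erase (hE ▸ hmE)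
          have hmS := hTS hmT
          rw [hSdef] at hmS
          obtain ⟨hm2k, -, -⟩ := hmS
          have hmlt : m < nmax :=
            lt_of_le_of_ne (hnmax ▸ T.le_max' m hmT) (Finset.ne_of_mem_erase (hE ▸ hmE))
          rw [Finset.mem_biUnion]
          refine ⟨s (m - 1), ?_, ?_⟩
          · rw [hV]
            exact Finset.mem_image_of_mem _ hmE
          · rw [Finset.mem_filter, Finset.mem_range]
            exact ⟨by omega, rfl⟩
        have hic : E.card = (E.image (fun m => m - 1)).card := by
          rw [Finset.card_image_of_injOn]
          intro x hx y hy hxy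
          have hxS := hTS (Finset.mem_of_mem_erase (hE ▸ hx))
          have hyS := hTS (Finset.mem_of_mem_erase (hE ▸ hy))
          rw [hSdef] at hxS hyS
          obtain ⟨hx2k, -, -⟩ := hxS
          obtain ⟨hy2k, -, -⟩ := hyS
          simp only [] at hxy
          omega
        calc E.card = (E.image (fun m => m - 1)).card := hic
          _ ≤ (V.biUnion (fun v => (Finset.range nmax).filter (fun m => s m = v))).card :=
              Finset.card_le_card himg
          _ = ∑ v ∈ V, ((Finset.range nmax).filter (fun m => s m = v)).card :=
              Finset.card_biUnion hdisj2
          _ = ∑ v ∈ V, multUpTo s nmax v :=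
              Finset.sum_congr rfl (fun v _ => (hmultN v).symm)
      omega
    -- Step 5: assemble
    apply aux_ncard_le
    intro T hTS
    have hcards := Finset.card_eq_sum_card_fiberwise
      (f := fun n => ⌊(Y n - (a - k * L)) / w⌋₊) (s := T) (t := Finset.range M)
      (fun x hx => Finset.mem_range.mpr (hgM x (hTS hx)))
    rw [hcards]
    calc ∑ i ∈ Finset.range M,
        (T.filter (fun x => ⌊(Y x - (a - k * L)) / w⌋₊ = i)).card
        ≤ ∑ _i ∈ Finset.range M, 2 * k := by
          apply Finset.sum_le_sum
          intro i _
          apply hfiber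
          · intro x hx
            rw [Finset.mem_coe, Finset.mem_filter] at hx
            exact hTS hx.1
          · intro m hm m' hm'
            rw [Finset.mem_filter] at hm hm'
            rw [hm.2, hm'.2]
      _ = M * (2 * k) := by rw [Finset.sum_const, Finset.card_range, smul_eq_mul]
      _ = 2 * k * M := by ring
end
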